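/- arXiv:2307.10066 — 3 statements merged into one kernel-verified Lean document; each statement's English description precedes it below -/
import Mathlib

section
/- Assume K has symmetric support and δ ≤ 1/2. Then log(1/p) ≤ 3 · diam(𝒳) · log(1/δ), where p = min_x π(x) and δ is the smallest non-zero entry of K. -/
open scoped Classical

noncomputable section

/-- `n`-th power of a kernel `K` on a finite set. -/
def matPow {X : Type*} [Fintype X] [DecidableEq X] (K : X → X → ℝ) : ℕ → X → X → ℝ
  | 0 => fun x y => if x = y then 1 else 0
  | n + 1 => fun x y => ∑ z, matPow K n x z * K z y

/-- `K` is a stochastic matrix with entries in `[0,1]` and rows summing to `1`. -/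
def IsStochastic {X : Type*} [Fintype X] (K : X → X → ℝ) : Prop :=
  (∀ x y, 0 ≤ K x y ∧ K x y ≤ 1) ∧ ∀ x, ∑ y, K x y = 1

/-- Irreducibility: any state can be reached from any state. -/
def IsIrreducibleMatrix {X : Type*} [Fintype X] [DecidableEq X] (K : X → X → ℝ) : Prop :=
  ∀ x y, ∃ n : ℕ, 0 < matPow K n x y

/-- `π` is the (positive) stationary probability vector of `K`. -/
def IsStationaryVec {X : Type*} [Fintype X] (K : X → X → ℝ) (π : X → ℝ) : Prop :=
  (∀ x, 0 < π x) ∧ (∑ x, π x = 1) ∧ ∀ y, ∑ x, π x * K x y = π y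

/-- A probability vector on a finite set. -/
def IsProbVector {X : Type*} [Fintype X] (μ : X → ℝ) : Prop :=
  (∀ x, 0 ≤ μ x) ∧ ∑ x, μ x = 1

/-- Continuous-time heat kernel `P_t(x,y) = e^{-t} ∑ t^n/n! Kⁿ(x,y)`. -/
def heatKernel {X : Type*} [Fintype X] [DecidableEq X] (K : X → X → ℝ) (t : ℝ) (x y : X) : ℝ :=
  Real.exp (-t) * ∑' n : ℕ, t ^ n / (Nat.factorial n : ℝ) * matPow K n x y

/-- Total variation distance between two vectors. -/
def dTV {X : Type*} [Fintype X] (μ ν : X → ℝ) : ℝ := (∑ x, |μ x - ν x|) / 2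

/-- Relative entropy (Kullback–Leibler divergence). -/
def dKL {X : Type*} [Fintype X] (μ ν : X → ℝ) : ℝ := ∑ x, μ x * Real.log (μ x / ν x)

/-- Varentropy. -/
def varKL {X : Type*} [Fintype X] (μ ν : X → ℝ) : ℝ :=
  ∑ x, μ x * (Real.log (μ x / ν x) - dKL μ ν) ^ 2

/-- Worst-case total variation distance to equilibrium at time `t`. -/
def worstTV {X : Type*} [Fintype X] [DecidableEq X] (K : X → X → ℝ) (π : X → ℝ) (t : ℝ) : ℝ :=
  sSup {v : ℝ | ∃ o : X, v = dTV (heatKernel K t o) π}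

/-- Worst-case relative entropy to equilibrium at time `t`. -/
def worstKL {X : Type*} [Fintype X] [DecidableEq X] (K : X → X → ℝ) (π : X → ℝ) (t : ℝ) : ℝ :=
  sSup {v : ℝ | ∃ o : X, v = dKL (heatKernel K t o) π}

/-- Worst-case varentropy at time `t`. -/
def worstVar {X : Type*} [Fintype X] [DecidableEq X] (K : X → X → ℝ) (π : X → ℝ) (t : ℝ) : ℝ :=
  sSup {v : ℝ | ∃ o : X, v = varKL (heatKernel K t o) π}

/-- Mixing time: first time the worst-case TV distance drops below `ε`. -/
def mixingTime {X : Type*} [Fintype X] [DecidableEq X] (K : X → X → ℝ) (π : X → ℝ) (ε : ℝ) : ℝ :=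
  sInf {t : ℝ | 0 ≤ t ∧ worstTV K π t ≤ ε}

/-- Variance of `f` with respect to `π`. -/
def varPi {X : Type*} [Fintype X] (π f : X → ℝ) : ℝ :=
  ∑ x, π x * (f x - ∑ y, π y * f y) ^ 2

/-- Poincaré constant: the largest `γ` with `γ·Var_π(f) ≤ (1/2)∑ π(x)K(x,y)(f(x)-f(y))²`. -/
def poincare {X : Type*} [Fintype X] (K : X → X → ℝ) (π : X → ℝ) : ℝ :=
  sSup {γ : ℝ | ∀ f : X → ℝ, γ * varPi π f ≤ (∑ x, ∑ y, π x * K x y * (f x - f y) ^ 2) / 2}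

/-- Smallest non-zero entry of `K`. -/
def minEntry {X : Type*} [Fintype X] (K : X → X → ℝ) : ℝ :=
  sInf {v : ℝ | (∃ x y, v = K x y) ∧ 0 < v}

/-- Smallest stationary probability `p = min_x π(x)`. -/
def statMin {X : Type*} [Fintype X] (π : X → ℝ) : ℝ :=
  sInf {v : ℝ | ∃ x, v = π x}

/-- The support of `K` is symmetric. -/
def SymmSupport {X : Type*} (K : X → X → ℝ) : Prop :=
  ∀ x y, 0 < K x y → 0 < K y x

/-- Graph distance associated with the support of `K`. -/
def mdist {X : Type*} [Fintype X] [DecidableEq X] (K : X → X → ℝ) (x y : X) : ℕ :=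
  sInf {n : ℕ | 0 < matPow K n x y}

/-- Diameter of the state space for the distance `mdist`. -/
def mdiam {X : Type*} [Fintype X] [DecidableEq X] (K : X → X → ℝ) : ℕ :=
  Finset.sup Finset.univ fun p : X × X => mdist K p.1 p.2

/-- Lipschitz norm of `f` with respect to `mdist`. -/
def lipNorm {X : Type*} [Fintype X] [DecidableEq X] (K : X → X → ℝ) (f : X → ℝ) : ℝ :=
  sSup {v : ℝ | ∃ x y, x ≠ y ∧ v = |f x - f y| / (mdist K x y : ℝ)}

set_option linter.unusedSectionVars false
set_option linter.unusedVariables false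

section Aux

variable {X : Type*} [Fintype X] [DecidableEq X] (K : X → X → ℝ) (π : X → ℝ)

lemma matPow_nonneg (hK : IsStochastic K) (n : ℕ) (x y : X) : 0 ≤ matPow K n x y := by
  induction n generalizing x y with
  | zero => simp only [matPow]; positivity
  | succ n ih =>
    simp only [matPow]
    exact Finset.sum_nonneg fun z _ => mul_nonneg (ih x z) (hK.1 z y).1

lemma stationary_matPow (hπ : IsStationaryVec K π) (n : ℕ) (y : X) :
    ∑ x, π x * matPow K n x y = π y := by
  induction n generalizing y with
  | zero => simp [matPow, Finset.sum_ite_eq', mul_comm]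
  | succ n ih =>
    simp only [matPow]
    calc ∑ x, π x * ∑ z, matPow K n x z * K z y
        = ∑ z, (∑ x, π x * matPow K n x z) * K z y := by
          simp_rw [Finset.mul_sum]
          rw [Finset.sum_comm]
          simp_rw [Finset.sum_mul, mul_assoc]
      _ = ∑ z, π z * K z y := by simp_rw [ih]
      _ = π y := hπ.2.2 y

lemma minEntry_mem (hK : IsStochastic K) [Nonempty X] :
    minEntry K ∈ {v : ℝ | (∃ x y, v = K x y) ∧ 0 < v} := by
  have hfin : ({v : ℝ | (∃ x y, v = K x y) ∧ 0 < v}).Finite := by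
    apply Set.Finite.subset (Set.finite_range (fun p : X × X => K p.1 p.2))
    rintro v ⟨⟨x, y, rfl⟩, -⟩
    exact ⟨(x, y), rfl⟩
  have hne : ({v : ℝ | (∃ x y, v = K x y) ∧ 0 < v}).Nonempty := by
    obtain ⟨x⟩ := ‹Nonempty X›
    have h1 : ∑ y, K x y = 1 := hK.2 x
    have : ∃ y, 0 < K x y := by
      by_contra h
      push_neg at h
      have : ∑ y, K x y ≤ 0 := Finset.sum_nonpos fun y _ => h y
      linarith
    obtain ⟨y, hy⟩ := this
    exact ⟨K x y, ⟨x, y, rfl⟩, hy⟩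
  exact hne.csInf_mem hfin

lemma minEntry_pos (hK : IsStochastic K) [Nonempty X] : 0 < minEntry K :=
  (minEntry_mem K hK).2

lemma minEntry_le (hK : IsStochastic K) {x y : X} (h : 0 < K x y) : minEntry K ≤ K x y := by
  have hfin : ({v : ℝ | (∃ x y, v = K x y) ∧ 0 < v}).Finite := by
    apply Set.Finite.subset (Set.finite_range (fun p : X × X => K p.1 p.2))
    rintro v ⟨⟨x, y, rfl⟩, -⟩
    exact ⟨(x, y), rfl⟩
  exact csInf_le hfin.bddBelow ⟨⟨x, y, rfl⟩, h⟩

lemma matPow_ge (hK : IsStochastic K) [Nonempty X] (n : ℕ) {x y : X}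
    (h : 0 < matPow K n x y) : minEntry K ^ n ≤ matPow K n x y := by
  induction n generalizing x y with
  | zero =>
    simp only [matPow] at h ⊢
    split at h
    · simp_all
    · simp at h
  | succ n ih =>
    simp only [matPow] at h ⊢
    obtain ⟨z, -, hz⟩ := Finset.exists_lt_of_sum_lt (by simpa using h :
      ∑ _z : X, (0:ℝ) < ∑ z, matPow K n x z * K z y)
    have h1 : 0 < matPow K n x z := by
      rcases (mul_pos_iff.mp hz) with ⟨a, b⟩ | ⟨a, b⟩
      · exact a
      · exact absurd b (not_lt.mpr (hK.1 z y).1)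
    have h2 : 0 < K z y := by
      rcases (mul_pos_iff.mp hz) with ⟨a, b⟩ | ⟨a, b⟩
      · exact b
      · exact absurd a (not_lt.mpr (matPow_nonneg K hK n x z))
    calc minEntry K ^ (n + 1) = minEntry K ^ n * minEntry K := by ring
      _ ≤ matPow K n x z * K z y :=
        mul_le_mul (ih h1) (minEntry_le K hK h2) (le_of_lt (minEntry_pos K hK))
          (matPow_nonneg K hK n x z)
      _ ≤ ∑ z, matPow K n x z * K z y :=
        Finset.single_le_sum (fun w _ => mul_nonneg (matPow_nonneg K hK n x w) (hK.1 w y).1)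
          (Finset.mem_univ z)

lemma mdist_spec (hirr : IsIrreducibleMatrix K) (x y : X) :
    0 < matPow K (mdist K x y) x y :=
  Nat.sInf_mem (hirr x y)

lemma mdist_le_mdiam (x y : X) : mdist K x y ≤ mdiam K :=
  Finset.le_sup (f := fun p : X × X => mdist K p.1 p.2) (Finset.mem_univ (x, y))

end Aux

section Aux2

variable {X : Type*} [Fintype X] [DecidableEq X] (K : X → X → ℝ) (π : X → ℝ)

lemma statMin_mem [Nonempty X] : statMin π ∈ {v : ℝ | ∃ x, v = π x} := by
  have hfin : ({v : ℝ | ∃ x, v = π x}).Finite := by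
    apply Set.Finite.subset (Set.finite_range π)
    rintro v ⟨x, rfl⟩
    exact ⟨x, rfl⟩
  obtain ⟨c⟩ := ‹Nonempty X›
  exact Set.Nonempty.csInf_mem ⟨π c, c, rfl⟩ hfin

lemma statMin_le (x : X) : statMin π ≤ π x := by
  have hfin : ({v : ℝ | ∃ x, v = π x}).Finite := by
    apply Set.Finite.subset (Set.finite_range π)
    rintro v ⟨x, rfl⟩
    exact ⟨x, rfl⟩
  exact csInf_le hfin.bddBelow ⟨x, rfl⟩

lemma exists_pos_factor (hK : IsStochastic K) (n : ℕ) {x y : X}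
    (h : 0 < matPow K (n + 1) x y) : ∃ z, 0 < matPow K n x z ∧ 0 < K z y := by
  simp only [matPow] at h
  obtain ⟨z, -, hz⟩ := Finset.exists_lt_of_sum_lt (by simpa using h :
    ∑ _z : X, (0:ℝ) < ∑ z, matPow K n x z * K z y)
  rcases mul_pos_iff.mp hz with ⟨a, b⟩ | ⟨a, b⟩
  · exact ⟨z, a, b⟩
  · exact absurd a (not_lt.mpr (matPow_nonneg K hK n x z))

lemma nbr_card_le (hK : IsStochastic K) [Nonempty X] (z : X) :
    ((Finset.univ.filter fun y => 0 < K z y).card : ℝ) ≤ 1 / minEntry K := by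
  have hδ := minEntry_pos K hK
  rw [le_div_iff₀ hδ]
  calc ((Finset.univ.filter fun y => 0 < K z y).card : ℝ) * minEntry K
      = (Finset.univ.filter fun y => 0 < K z y).card • minEntry K := by
        rw [nsmul_eq_mul]
    _ ≤ ∑ y ∈ Finset.univ.filter fun y => 0 < K z y, K z y :=
        Finset.card_nsmul_le_sum _ _ _ fun y hy =>
          minEntry_le K hK (Finset.mem_filter.mp hy).2
    _ ≤ ∑ y, K z y :=
        Finset.sum_le_sum_of_subset_of_nonneg (Finset.filter_subset _ _)
          (fun y _ _ => (hK.1 z y).1)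
    _ = 1 := hK.2 z

lemma ball_card_le (hK : IsStochastic K) (hirr : IsIrreducibleMatrix K) [Nonempty X]
    (hδ : minEntry K ≤ 1 / 2) (x : X) (k : ℕ) :
    ((Finset.univ.filter fun y => mdist K x y ≤ k).card : ℝ) ≤ (1 / minEntry K) ^ (2 * k) := by
  have hδ0 := minEntry_pos K hK
  have hm2 : (2:ℝ) ≤ 1 / minEntry K := by
    rw [le_div_iff₀ hδ0]; linarith
  induction k with
  | zero =>
    have hsub : (Finset.univ.filter fun y => mdist K x y ≤ 0) ⊆ {x} := by
      intro y hy
      have h0 : mdist K x y = 0 := Nat.le_zero.mp (Finset.mem_filter.mp hy).2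
      have := mdist_spec K hirr x y
      rw [h0] at this
      simp only [matPow] at this
      by_cases hxy : x = y
      · simp [hxy]
      · simp [hxy] at this
    calc ((Finset.univ.filter fun y => mdist K x y ≤ 0).card : ℝ)
        ≤ ({x} : Finset X).card := by exact_mod_cast Finset.card_le_card hsub
      _ = 1 := by simp
      _ ≤ (1 / minEntry K) ^ (2 * 0) := by simp
  | succ k ih =>
    set B : Finset X := Finset.univ.filter fun y => mdist K x y ≤ k with hB
    have hsub : (Finset.univ.filter fun y => mdist K x y ≤ k + 1) ⊆
        B.biUnion fun z => insert z (Finset.univ.filter fun y => 0 < K z y) := by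
      intro y hy
      have hle : mdist K x y ≤ k + 1 := (Finset.mem_filter.mp hy).2
      rcases Nat.lt_or_ge (mdist K x y) (k + 1) with h | h
      · exact Finset.mem_biUnion.mpr ⟨y, Finset.mem_filter.mpr ⟨Finset.mem_univ y,
          Nat.lt_succ_iff.mp h⟩, Finset.mem_insert_self y _⟩
      · have heq : mdist K x y = k + 1 := le_antisymm hle h
        have hpos := mdist_spec K hirr x y
        rw [heq] at hpos
        obtain ⟨z, hz1, hz2⟩ := exists_pos_factor K hK k hpos
        have hzd : mdist K x z ≤ k := Nat.sInf_le hz1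
        exact Finset.mem_biUnion.mpr ⟨z, Finset.mem_filter.mpr ⟨Finset.mem_univ z, hzd⟩,
          Finset.mem_insert_of_mem (Finset.mem_filter.mpr ⟨Finset.mem_univ y, hz2⟩)⟩
    have hcard : ((Finset.univ.filter fun y => mdist K x y ≤ k + 1).card : ℝ) ≤
        (B.card : ℝ) * (1 + 1 / minEntry K) := by
      calc ((Finset.univ.filter fun y => mdist K x y ≤ k + 1).card : ℝ)
          ≤ ((B.biUnion fun z => insert z (Finset.univ.filter fun y => 0 < K z y)).card : ℝ) := by
            exact_mod_cast Finset.card_le_card hsub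
        _ ≤ (∑ z ∈ B, (insert z (Finset.univ.filter fun y => 0 < K z y)).card : ℕ) := by
            exact_mod_cast Finset.card_biUnion_le
        _ = ∑ z ∈ B, ((insert z (Finset.univ.filter fun y => 0 < K z y)).card : ℝ) := by
            push_cast; ring
        _ ≤ ∑ z ∈ B, (1 + 1 / minEntry K) := by
            apply Finset.sum_le_sum
            intro z _
            calc ((insert z (Finset.univ.filter fun y => 0 < K z y)).card : ℝ)
                ≤ ((Finset.univ.filter fun y => 0 < K z y).card : ℝ) + 1 := by
                  exact_mod_cast Finset.card_insert_le _ _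
              _ ≤ 1 + 1 / minEntry K := by
                  have := nbr_card_le K hK z
                  linarith
        _ = (B.card : ℝ) * (1 + 1 / minEntry K) := by
            rw [Finset.sum_const, nsmul_eq_mul]
    calc ((Finset.univ.filter fun y => mdist K x y ≤ k + 1).card : ℝ)
        ≤ (B.card : ℝ) * (1 + 1 / minEntry K) := hcard
      _ ≤ (1 / minEntry K) ^ (2 * k) * (1 / minEntry K) ^ 2 := by
          apply mul_le_mul ih _ (by positivity) (by positivity)
          nlinarith
      _ = (1 / minEntry K) ^ (2 * (k + 1)) := by ring

end Aux2

/-- Control on the minimal stationary probability. -/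
theorem stmt_6 {X : Type*} [Fintype X] [DecidableEq X]
    (hcard : 2 ≤ Fintype.card X)
    (K : X → X → ℝ) (π : X → ℝ)
    (hK : IsStochastic K) (hirr : IsIrreducibleMatrix K) (hπ : IsStationaryVec K π)
    (hsym : SymmSupport K)
    (hδ : minEntry K ≤ 1 / 2) :
    Real.log (1 / statMin π) ≤
      3 * (mdiam K : ℝ) * Real.log (1 / minEntry K) := by
  have hne : Nonempty X := Fintype.card_pos_iff.mp (by omega)
  set δ := minEntry K with hδdef
  have hδ0 : 0 < δ := minEntry_pos K hK
  have hδ1 : δ ≤ 1 := by linarith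
  set D := mdiam K with hDdef
  -- argmin of π
  obtain ⟨y0, hy0⟩ := statMin_mem π
  -- element with π ≥ 1/card
  have hcard0 : (0:ℝ) < (Fintype.card X : ℝ) := by positivity
  obtain ⟨xs, -, hxs⟩ : ∃ x ∈ Finset.univ, 1 / (Fintype.card X : ℝ) ≤ π x := by
    apply Finset.exists_le_of_sum_le Finset.univ_nonempty
    rw [Finset.sum_const, nsmul_eq_mul, hπ.2.1]
    rw [Finset.card_univ]
    field_simp
    exact le_refl 1
  -- π y0 ≥ π xs * δ^D
  set n := mdist K xs y0 with hndef
  have hnD : n ≤ D := mdist_le_mdiam K xs y0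
  have hmp : 0 < matPow K n xs y0 := mdist_spec K hirr xs y0
  have h1 : π xs * δ ^ n ≤ π y0 := by
    calc π xs * δ ^ n ≤ π xs * matPow K n xs y0 :=
          mul_le_mul_of_nonneg_left (matPow_ge K hK n hmp) (le_of_lt (hπ.1 xs))
      _ ≤ ∑ z, π z * matPow K n z y0 :=
          Finset.single_le_sum (fun z _ => mul_nonneg (le_of_lt (hπ.1 z))
            (matPow_nonneg K hK n z y0)) (Finset.mem_univ xs)
      _ = π y0 := stationary_matPow K π hπ n y0
  have h2 : δ ^ D ≤ δ ^ n := pow_le_pow_of_le_one (le_of_lt hδ0) hδ1 hnD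
  -- cardinality bound
  have hball := ball_card_le K hK hirr hδ xs D
  have huniv : (Finset.univ.filter fun y => mdist K xs y ≤ D) = Finset.univ := by
    apply Finset.filter_true_of_mem
    intro y _
    exact mdist_le_mdiam K xs y
  rw [huniv, Finset.card_univ] at hball
  have hcardle : (Fintype.card X : ℝ) ≤ 1 / δ ^ (2 * D) := by
    rw [one_div_pow] at hball
    exact hball
  have h3 : δ ^ (2 * D) ≤ 1 / (Fintype.card X : ℝ) := by
    rw [le_div_iff₀ hcard0]
    have hpow : (0:ℝ) < δ ^ (2 * D) := by positivity
    rw [le_div_iff₀ hpow] at hcardle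
    linarith [hcardle]
  -- chain: δ^(3D) ≤ statMin π
  have hchain : δ ^ (3 * D) ≤ statMin π := by
    have e1 : δ ^ (3 * D) = δ ^ (2 * D) * δ ^ D := by
      rw [← pow_add]; ring_nf
    have e2 : δ ^ (2 * D) * δ ^ D ≤ (1 / (Fintype.card X : ℝ)) * δ ^ D :=
      mul_le_mul_of_nonneg_right h3 (by positivity)
    have e3 : (1 / (Fintype.card X : ℝ)) * δ ^ D ≤ π xs * δ ^ D :=
      mul_le_mul_of_nonneg_right hxs (by positivity)
    have e4 : π xs * δ ^ D ≤ π xs * δ ^ n :=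
      mul_le_mul_of_nonneg_left h2 (le_of_lt (hπ.1 xs))
    rw [hy0]
    calc δ ^ (3 * D) = δ ^ (2 * D) * δ ^ D := e1
      _ ≤ (1 / (Fintype.card X : ℝ)) * δ ^ D := e2
      _ ≤ π xs * δ ^ D := e3
      _ ≤ π xs * δ ^ n := e4
      _ ≤ π y0 := h1
  -- logs
  have hp0 : 0 < statMin π := lt_of_lt_of_le (by positivity) hchain
  have hlog : Real.log (δ ^ (3 * D)) ≤ Real.log (statMin π) :=
    Real.log_le_log (by positivity) hchain
  rw [Real.log_pow] at hlog
  rw [one_div, one_div, Real.log_inv, Real.log_inv]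
  push_cast at hlog ⊢
  linarith
end
end

section
/- For all real numbers u, v with 0 < u ≤ v and v > 1, the inequality u · log u ≤ (v log v / (v − 1)) · max(u − 1, 0) holds. -/
open scoped Classical

noncomputable section

private lemma g_hasDeriv (t : ℝ) (ht : 1 < t) :
    HasDerivAt (fun s : ℝ => s * Real.log s / (s - 1))
      ((t - 1 - Real.log t) / (t - 1) ^ 2) t := by
  have h0 : t ≠ 0 := by linarith
  have h1 : HasDerivAt (fun s : ℝ => s * Real.log s) (Real.log t + 1) t := by
    have := (hasDerivAt_id t).mul (Real.hasDerivAt_log h0)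
    refine this.congr_deriv ?_
    field_simp
    simp only [id]
    ring
  have h2 : HasDerivAt (fun s : ℝ => s - 1) 1 t := (hasDerivAt_id t).sub_const 1
  have h3 := h1.div h2 (by linarith : t - 1 ≠ 0)
  refine h3.congr_deriv ?_
  ring

private lemma g_mono : MonotoneOn (fun s : ℝ => s * Real.log s / (s - 1)) (Set.Ioi 1) := by
  have hs : StrictMonoOn (fun s : ℝ => s * Real.log s / (s - 1)) (Set.Ioi 1) := by
    apply strictMonoOn_of_deriv_pos (convex_Ioi 1)
    · exact fun x hx => (g_hasDeriv x hx).continuousAt.continuousWithinAt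
    · intro x hx
      rw [interior_Ioi] at hx
      have hx' : 1 < x := hx
      rw [(g_hasDeriv x hx).deriv]
      have hlog : Real.log x < x - 1 := by
        have := Real.log_lt_sub_one_of_pos (by linarith : (0:ℝ) < x) (by intro h; rw [h] at hx'; linarith)
        linarith
      exact div_pos (by linarith) (pow_pos (by linarith) 2)
  exact hs.monotoneOn

/-- Elementary inequality behind the reversed Pinsker inequality. -/
theorem stmt_14 (u v : ℝ) (hu : 0 < u) (huv : u ≤ v) (hv : 1 < v) :
    u * Real.log u ≤ v * Real.log v / (v - 1) * max (u - 1) 0 := by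
  rcases le_or_gt u 1 with h1 | h1
  · have : max (u - 1) 0 = 0 := max_eq_right (by linarith)
    rw [this, mul_zero]
    exact mul_nonpos_of_nonneg_of_nonpos hu.le (Real.log_nonpos hu.le h1)
  · have hmax : max (u - 1) 0 = u - 1 := max_eq_left (by linarith)
    rw [hmax]
    have key : u * Real.log u / (u - 1) ≤ v * Real.log v / (v - 1) :=
      g_mono (Set.mem_Ioi.2 h1) (Set.mem_Ioi.2 hv) huv
    have hne : u - 1 ≠ 0 := by linarith
    calc u * Real.log u = u * Real.log u / (u - 1) * (u - 1) := by field_simp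
      _ ≤ v * Real.log v / (v - 1) * (u - 1) :=
        mul_le_mul_of_nonneg_right key (by linarith)
end
end

section
/- Let μ be a probability vector on 𝒳 and θ > 0, and set p = min_x π(x) ∈ (0,1). Then the upper and lower tails of the likelihood ratio satisfy: Σ_{x : μ(x)/π(x) ≥ p^{−θ}} μ(x) ≤ d_KL(μ,π) / (θ log(1/p) + p^{θ} − 1), and Σ_{x : 0 < μ(x)/π(x) ≤ p^{θ}} μ(x) ≤ d_KL(μ,π) / (p^{−θ} − θ log(1/p) − 1). -/
open scoped Classical

noncomputable section

/-- F(u) = log u + 1/u - 1 -/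
def Fkl (u : ℝ) : ℝ := Real.log u + u⁻¹ - 1

lemma Fkl_mono {u t : ℝ} (hu : 0 < u) (ht : 0 < t) (h : 0 ≤ (u - t) * (t - 1)) :
    Fkl t ≤ Fkl u := by
  have hlog : Real.log t - Real.log u ≤ t / u - 1 := by
    have h1 := Real.log_le_sub_one_of_pos (show (0:ℝ) < t / u from div_pos ht hu)
    rwa [Real.log_div ht.ne' hu.ne'] at h1
  have hui : u⁻¹ = 1 / u := by ring
  have hti : t⁻¹ = 1 / t := by ring
  unfold Fkl
  rw [hui, hti]
  have key : 0 ≤ (1 - t / u) + 1 / u - 1 / t := by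
    have : (1 - t / u) + 1 / u - 1 / t = (u - t) * (t - 1) / (u * t) := by
      field_simp; ring
    rw [this]
    positivity
  linarith

lemma Fkl_nonneg {u : ℝ} (hu : 0 < u) : 0 ≤ Fkl u := by
  have h := Fkl_mono hu one_pos (by ring_nf; simp)
  simpa [Fkl] using h

lemma Fkl_pos {u : ℝ} (hu : 0 < u) (hne : u ≠ 1) : 0 < Fkl u := by
  have h1 : (0:ℝ) < u⁻¹ := by positivity
  have hne' : u⁻¹ ≠ 1 := by
    intro h; apply hne; field_simp at h; simp [h]
  have := Real.log_lt_sub_one_of_pos h1 hne'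
  rw [Real.log_inv] at this
  unfold Fkl; linarith

lemma sum_Fkl_le_dKL {X : Type*} [Fintype X] (μ π : X → ℝ)
    (hπpos : ∀ x, 0 < π x) (hπ1 : ∑ x, π x = 1)
    (hμ0 : ∀ x, 0 ≤ μ x) (hμ1 : ∑ x, μ x = 1) :
    ∑ x, μ x * Fkl (μ x / π x) ≤ dKL μ π := by
  have hterm : ∀ x, μ x * Fkl (μ x / π x) ≤ μ x * Real.log (μ x / π x) + (π x - μ x) := by
    intro x
    rcases (hμ0 x).eq_or_lt with h | h
    · simp [← h, Fkl, (hπpos x).le]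
    · have hπx := hπpos x
      have : μ x * (μ x / π x)⁻¹ = π x := by field_simp
      unfold Fkl
      nlinarith [this]
  calc ∑ x, μ x * Fkl (μ x / π x) ≤ ∑ x, (μ x * Real.log (μ x / π x) + (π x - μ x)) :=
        Finset.sum_le_sum fun x _ => hterm x
    _ = dKL μ π := by
        rw [Finset.sum_add_distrib, Finset.sum_sub_distrib, hπ1, hμ1, dKL]; ring

lemma tail_bound {X : Type*} [Fintype X] (μ π : X → ℝ)
    (hπpos : ∀ x, 0 < π x) (hπ1 : ∑ x, π x = 1)
    (hμ0 : ∀ x, 0 ≤ μ x) (hμ1 : ∑ x, μ x = 1)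
    (s : Finset X) (c : ℝ) (hc : 0 < c)
    (hst : ∀ x ∈ s, c ≤ Fkl (μ x / π x)) :
    ∑ x ∈ s, μ x ≤ dKL μ π / c := by
  rw [le_div_iff₀ hc]
  calc (∑ x ∈ s, μ x) * c = ∑ x ∈ s, μ x * c := by rw [Finset.sum_mul]
    _ ≤ ∑ x ∈ s, μ x * Fkl (μ x / π x) :=
        Finset.sum_le_sum fun x hx => mul_le_mul_of_nonneg_left (hst x hx) (hμ0 x)
    _ ≤ ∑ x, μ x * Fkl (μ x / π x) := by
        apply Finset.sum_le_sum_of_subset_of_nonneg (Finset.subset_univ s)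
        intro x _ _
        rcases (hμ0 x).eq_or_lt with h | h
        · simp [← h]
        · exact mul_nonneg h.le (Fkl_nonneg (div_pos h (hπpos x)))
    _ ≤ dKL μ π := sum_Fkl_le_dKL μ π hπpos hπ1 hμ0 hμ1

lemma statMin_facts {X : Type*} [Fintype X] (hcard : 2 ≤ Fintype.card X)
    (π : X → ℝ) (hπpos : ∀ x, 0 < π x) (hπ1 : ∑ x, π x = 1) :
    (0 < statMin π ∧ statMin π < 1) ∧ ∀ x, statMin π ≤ π x := by
  have hne : Nonempty X := Fintype.card_pos_iff.mp (by omega)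
  have hSr : {v : ℝ | ∃ x, v = π x} = Set.range π := by
    ext v; simp [eq_comm]
  have hfin : Set.Finite {v : ℝ | ∃ x, v = π x} := hSr ▸ Set.finite_range π
  have hSne : Set.Nonempty {v : ℝ | ∃ x, v = π x} :=
    ⟨π (Classical.arbitrary X), ⟨_, rfl⟩⟩
  have hle : ∀ x, statMin π ≤ π x := fun x => csInf_le hfin.bddBelow ⟨x, rfl⟩
  obtain ⟨x0, hx0⟩ := hSne.csInf_mem hfin
  have hlt : π x0 < 1 := by
    obtain ⟨y, hy⟩ := Fintype.exists_ne_of_one_lt_card (by omega) x0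
    have := Finset.single_lt_sum hy (Finset.mem_univ x0) (Finset.mem_univ y)
      (hπpos y) (fun k _ _ => (hπpos k).le)
    rwa [hπ1] at this
  have hps : statMin π = π x0 := hx0
  exact ⟨⟨hps ▸ hπpos x0, hps ▸ hlt⟩, hle⟩

/-- Tail bounds on the likelihood ratio via Markov's inequality. -/
theorem stmt_15 {X : Type*} [Fintype X] [DecidableEq X]
    (hcard : 2 ≤ Fintype.card X)
    (K : X → X → ℝ) (π : X → ℝ)
    (hK : IsStochastic K) (hirr : IsIrreducibleMatrix K) (hπ : IsStationaryVec K π)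
    (μ : X → ℝ) (hμ : IsProbVector μ)
    (θ : ℝ) (hθ : 0 < θ) :
    (∑ x ∈ Finset.univ.filter (fun x => statMin π ^ (-θ) ≤ μ x / π x), μ x) ≤
        dKL μ π / (θ * Real.log (1 / statMin π) + statMin π ^ θ - 1) ∧
    (∑ x ∈ Finset.univ.filter (fun x => 0 < μ x / π x ∧ μ x / π x ≤ statMin π ^ θ), μ x) ≤
        dKL μ π / (statMin π ^ (-θ) - θ * Real.log (1 / statMin π) - 1) := by
  obtain ⟨⟨hp0, hp1⟩, -⟩ := statMin_facts hcard π hπ.1 hπ.2.1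
  set p := statMin π with hp
  have hπpos := hπ.1
  have hlog : Real.log (1 / p) = -Real.log p := by rw [one_div, Real.log_inv]
  have hinv : (p ^ (-θ))⁻¹ = p ^ θ := by
    rw [← Real.rpow_neg hp0.le, neg_neg]
  have hinv2 : (p ^ θ)⁻¹ = p ^ (-θ) := by
    rw [← Real.rpow_neg hp0.le]
  have hlogt1 : Real.log (p ^ (-θ)) = -θ * Real.log p := Real.log_rpow hp0 _
  have hlogt2 : Real.log (p ^ θ) = θ * Real.log p := Real.log_rpow hp0 _
  have ht1pos : (0:ℝ) < p ^ (-θ) := Real.rpow_pos_of_pos hp0 _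
  have ht2pos : (0:ℝ) < p ^ θ := Real.rpow_pos_of_pos hp0 _
  have ht1gt : 1 < p ^ (-θ) :=
    (Real.one_lt_rpow_iff_of_pos hp0).mpr (Or.inr ⟨hp1, by linarith⟩)
  have ht2lt : p ^ θ < 1 := Real.rpow_lt_one hp0.le hp1 hθ
  have hc1 : θ * Real.log (1 / p) + p ^ θ - 1 = Fkl (p ^ (-θ)) := by
    rw [Fkl, hlogt1, hinv, hlog]; ring
  have hc2 : p ^ (-θ) - θ * Real.log (1 / p) - 1 = Fkl (p ^ θ) := by
    rw [Fkl, hlogt2, hinv2, hlog]; ring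
  constructor
  · rw [hc1]
    apply tail_bound μ π hπpos hπ.2.1 hμ.1 hμ.2 _ _
      (Fkl_pos ht1pos (by linarith))
    intro x hx
    rw [Finset.mem_filter] at hx
    have hu : p ^ (-θ) ≤ μ x / π x := hx.2
    exact Fkl_mono (lt_of_lt_of_le ht1pos hu) ht1pos (by nlinarith)
  · rw [hc2]
    apply tail_bound μ π hπpos hπ.2.1 hμ.1 hμ.2 _ _
      (Fkl_pos ht2pos (by linarith))
    intro x hx
    rw [Finset.mem_filter] at hx
    obtain ⟨hu0, hu⟩ := hx.2
    exact Fkl_mono hu0 ht2pos (by nlinarith)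
end
end
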